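/- If n is an integer exceeding 1, then the least divisor of n^(n^n) - 1 that exceeds 1 is the smallest prime not dividing n. -/

import Mathlib

private lemma two_mul_le_two_pow : ∀ n : ℕ, 2 ≤ n → 2 * n ≤ 2 ^ n := by
  intro n hn
  induction n with
  | zero => omega
  | succ k ih =>
    rcases Nat.lt_or_ge k 2 with h | h
    · interval_cases k <;> simp_all <;> omega
    · have := ih h
      have : 2 ^ k ≤ 2 ^ (k + 1) := Nat.pow_le_pow_right (by norm_num) (by omega)
      omega

theorem least_divisor_superpower (n : ℕ) (hn : 1 < n) :
    sInf {d : ℕ | 1 < d ∧ d ∣ n ^ (n ^ n) - 1} = sInf {p : ℕ | p.Prime ∧ ¬ p ∣ n} := by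
  have hn0 : 0 < n := by omega
  obtain ⟨r, hrn, hrp⟩ := Nat.exists_infinite_primes (n + 1)
  have hrne : {p : ℕ | p.Prime ∧ ¬ p ∣ n}.Nonempty :=
    ⟨r, hrp, fun h => absurd (Nat.le_of_dvd hn0 h) (by omega)⟩
  set q := sInf {p : ℕ | p.Prime ∧ ¬ p ∣ n} with hq
  obtain ⟨hqp, hqn⟩ := Nat.sInf_mem hrne
  have hq2 : 2 ≤ q := hqp.two_le
  -- all primes < q divide n
  have hsmall : ∀ p : ℕ, p.Prime → p < q → p ∣ n := by
    intro p hp hpq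
    by_contra h
    have : q ≤ p := Nat.sInf_le (show p ∈ {p : ℕ | p.Prime ∧ ¬ p ∣ n} from ⟨hp, h⟩)
    omega
  -- q ≤ 2 * n
  obtain ⟨b, hbp, hnb, hb2n⟩ := Nat.exists_prime_lt_and_le_two_mul n (by omega)
  have hq2n : q ≤ 2 * n :=
    le_trans (Nat.sInf_le ⟨hbp, fun h => absurd (Nat.le_of_dvd hn0 h) (by omega)⟩) hb2n
  have h2n : 2 * n ≤ 2 ^ n := two_mul_le_two_pow n hn
  -- q - 1 ∣ n ^ n
  have hdvd : q - 1 ∣ n ^ n := by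
    rcases Nat.eq_or_lt_of_le hq2 with h2 | h3
    · simp [← h2]
    · rw [← Nat.factorization_le_iff_dvd (by omega) (by positivity)]
      intro p
      rcases Nat.eq_zero_or_pos ((q - 1).factorization p) with h0 | hpos
      · simp [h0]
      · have hmem : p ∈ (q - 1).primeFactors := by
          rw [← Nat.support_factorization]
          exact Finsupp.mem_support_iff.mpr (by omega)
        have hpp : p.Prime := Nat.prime_of_mem_primeFactors hmem
        have hpd : p ∣ q - 1 := Nat.dvd_of_mem_primeFactors hmem
        have hplt : p < q := lt_of_le_of_lt (Nat.le_of_dvd (by omega) hpd) (by omega)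
        have hpn : p ∣ n := hsmall p hpp hplt
        -- exponent bound
        have hpow : p ^ ((q - 1).factorization p) ∣ q - 1 := Nat.ordProj_dvd _ _
        have hle : p ^ ((q - 1).factorization p) ≤ q - 1 := Nat.le_of_dvd (by omega) hpow
        have h2le : 2 ^ ((q - 1).factorization p) ≤ q - 1 :=
          le_trans (Nat.pow_le_pow_left hpp.two_le _) hle
        have hfle : (q - 1).factorization p ≤ n := by
          by_contra hc
          push_neg at hc
          have : 2 ^ n < 2 ^ ((q - 1).factorization p) :=
            Nat.pow_lt_pow_right (by norm_num) hc
          omega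
        have hposn : 0 < n.factorization p :=
          hpp.factorization_pos_of_dvd (by omega) hpn
        calc (q - 1).factorization p ≤ n := hfle
          _ ≤ n * n.factorization p := Nat.le_mul_of_pos_right _ hposn
          _ = (n ^ n).factorization p := by rw [Nat.factorization_pow]; simp
  -- q ∣ n ^ (n ^ n) - 1
  have hm1 : 1 ≤ n ^ (n ^ n) := Nat.one_le_pow _ _ hn0
  have hqm : q ∣ n ^ (n ^ n) - 1 := by
    haveI : Fact q.Prime := ⟨hqp⟩
    have hz : (n : ZMod q) ≠ 0 := fun h =>
      hqn ((ZMod.natCast_eq_zero_iff n q).mp h)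
    have h1 : (n : ZMod q) ^ (q - 1) = 1 := ZMod.pow_card_sub_one_eq_one hz
    obtain ⟨k, hk⟩ := hdvd
    have h2 : (n : ZMod q) ^ (n ^ n) = 1 := by
      rw [hk, pow_mul, h1, one_pow]
    rw [← ZMod.natCast_eq_zero_iff]
    push_cast [Nat.cast_sub hm1]
    rw [h2]; ring
  have hm2 : 1 < n ^ (n ^ n) - 1 := by
    have h4 : 4 ≤ n ^ n := by
      calc 4 = 2 ^ 2 := by norm_num
      _ ≤ n ^ n := Nat.pow_le_pow_left hn n |>.trans' (Nat.pow_le_pow_right (by omega) hn)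
    have : n ^ n ≤ n ^ (n ^ n) := Nat.pow_le_pow_right hn0 (Nat.le_of_lt (Nat.lt_pow_self hn : n < n ^ n))
    omega
  -- left set nonempty, contains q
  have hqL : q ∈ {d : ℕ | 1 < d ∧ d ∣ n ^ (n ^ n) - 1} := ⟨by omega, hqm⟩
  have hLne : {d : ℕ | 1 < d ∧ d ∣ n ^ (n ^ n) - 1}.Nonempty := ⟨q, hqL⟩
  obtain ⟨hd1, hddvd⟩ := Nat.sInf_mem hLne
  set d := sInf {d : ℕ | 1 < d ∧ d ∣ n ^ (n ^ n) - 1} with hdset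
  -- d is prime
  have hdp : d.Prime := by
    have h1 : d.minFac ≤ d := Nat.minFac_le (by omega)
    have h2 : d ≤ d.minFac := Nat.sInf_le
      (show d.minFac ∈ {d : ℕ | 1 < d ∧ d ∣ n ^ (n ^ n) - 1} from
        ⟨(Nat.minFac_prime (show d ≠ 1 by omega)).one_lt, (Nat.minFac_dvd d).trans hddvd⟩)
    have heq : d = d.minFac := le_antisymm h2 h1
    rw [heq]
    exact Nat.minFac_prime (by omega)
  -- d ∤ n
  have hdn : ¬ d ∣ n := by
    intro h
    have h1 : d ∣ n ^ (n ^ n) := h.trans (dvd_pow_self n (by positivity))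
    have h2 := Nat.dvd_sub h1 hddvd
    have heq : n ^ (n ^ n) - (n ^ (n ^ n) - 1) = 1 := by omega
    rw [heq] at h2
    have := Nat.le_of_dvd one_pos h2
    omega
  exact le_antisymm (Nat.sInf_le hqL) (Nat.sInf_le ⟨hdp, hdn⟩)
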